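/- Let G be a bidirected tree with seed set S and boost set B. If u ∈ S ∪ B then σ_S(B ∪ {u}) = σ_S(B). If u ∉ S ∪ B, then σ_S(B ∪ {u}) = σ_S(B) + Δap_B(u) + ∑_{v ∈ N(u)} p^B_{uv} · Δap_B(u\v) · g_B(v\u), where Δap_B(u) = ap_{B∪{u}}(u) − ap_B(u) and Δap_B(u\v) = ap_{B∪{u}}(u\v) − ap_B(u\v). -/

import Mathlib

open Finset
open scoped Classical

noncomputable section

variable {V : Type*}

/-- The probability weight of the live-edge configuration `L ⊆ E`:
each edge `e ∈ E` is independently live with probability `p e`. -/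
def edgeWeight [DecidableEq V] (E : Finset (V × V)) (p : V × V → ℝ)
    (L : Finset (V × V)) : ℝ :=
  (∏ e ∈ L, p e) * ∏ e ∈ E \ L, (1 - p e)

/-- `v` is activated in configuration `L`: it is reachable from some seed in `S`
through live (directed) edges. -/
def Reaches (L : Finset (V × V)) (S : Finset V) (v : V) : Prop :=
  ∃ s ∈ S, Relation.ReflTransGen (fun a b => (a, b) ∈ L) s v

/-- Activation probability of node `v` under the live-edge model with edge set `E`,
edge probabilities `p`, and seed set `S`. -/
def ap [Fintype V] [DecidableEq V] (E : Finset (V × V)) (p : V × V → ℝ)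
    (S : Finset V) (v : V) : ℝ :=
  ∑ L ∈ E.powerset, edgeWeight E p L * (if Reaches L S v then 1 else 0)

/-- Expected number of activated nodes lying in the node set `W`. -/
def spreadOn [Fintype V] [DecidableEq V] (E : Finset (V × V)) (p : V × V → ℝ)
    (S W : Finset V) : ℝ :=
  ∑ L ∈ E.powerset, edgeWeight E p L * ((W.filter (fun v => Reaches L S v)).card : ℝ)

/-- The influence spread `σ_S`: expected total number of activated nodes. -/
def spread [Fintype V] [DecidableEq V] (E : Finset (V × V)) (p : V × V → ℝ)
    (S : Finset V) : ℝ :=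
  spreadOn E p S Finset.univ

/-- Boosted edge probabilities: edges pointing into a boosted node use `p'`. -/
def pB (p p' : V × V → ℝ) (B : Finset V) : V × V → ℝ :=
  fun e => if e.2 ∈ B then p' e else p e

/-- The bidirected edge set of an undirected graph: each undirected edge is
replaced by the two directed edges. -/
def treeEdges [Fintype V] [DecidableEq V] (T : SimpleGraph V) [DecidableRel T.Adj] :
    Finset (V × V) :=
  Finset.univ.filter (fun e => T.Adj e.1 e.2)

/-- `apSub E p S v u` is `ap_B(v\u)`: the activation probability of `v` in the
subtree `G_{v\u}` obtained by removing the directed edges `(u,v)` and `(v,u)`. -/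
def apSub [Fintype V] [DecidableEq V] (E : Finset (V × V)) (p : V × V → ℝ)
    (S : Finset V) (v u : V) : ℝ :=
  ap (E \ {(u, v), (v, u)}) p S v

/-- The set of nodes of the connected component containing `v` w.r.t. edge set `E`. -/
def comp [Fintype V] [DecidableEq V] (E : Finset (V × V)) (v : V) : Finset V :=
  Finset.univ.filter (fun w => Relation.ReflTransGen (fun a b => (a, b) ∈ E) v w)

/-- `gain E p S v u` is `g_B(v\u)`: in the subtree `G_{v\u}`, the expected number of
activated nodes when the seed set is `(S ∩ V(G_{v\u})) ∪ {v}` minus the expected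
number when the seed set is `S ∩ V(G_{v\u})`. -/
def gain [Fintype V] [DecidableEq V] (E : Finset (V × V)) (p : V × V → ℝ)
    (S : Finset V) (v u : V) : ℝ :=
  spreadOn (E \ {(u, v), (v, u)}) p (insert v (S ∩ comp (E \ {(u, v), (v, u)}) v))
      (comp (E \ {(u, v), (v, u)}) v)
    - spreadOn (E \ {(u, v), (v, u)}) p (S ∩ comp (E \ {(u, v), (v, u)}) v)
      (comp (E \ {(u, v), (v, u)}) v)

lemma sum_edgeWeight [DecidableEq V] (E : Finset (V × V)) (p : V × V → ℝ) :
    ∑ L ∈ E.powerset, edgeWeight E p L = 1 := by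
  have h := Finset.prod_add p (fun e => 1 - p e) E
  simp only [edgeWeight]
  rw [← h]
  simp

lemma sum_powerset_union [DecidableEq V] {E1 E2 : Finset (V × V)} (h : Disjoint E1 E2)
    (f : Finset (V × V) → ℝ) :
    ∑ L ∈ (E1 ∪ E2).powerset, f L
      = ∑ L1 ∈ E1.powerset, ∑ L2 ∈ E2.powerset, f (L1 ∪ L2) := by
  rw [← Finset.sum_product']
  apply Finset.sum_nbij' (fun L => (L ∩ E1, L ∩ E2)) (fun P => P.1 ∪ P.2)
  · intro L hL
    simp only [Finset.mem_powerset] at hL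
    simp [Finset.mem_product, Finset.inter_subset_right]
  · intro P hP
    simp only [Finset.mem_product, Finset.mem_powerset] at hP ⊢
    exact Finset.union_subset_union hP.1 hP.2
  · intro L hL
    simp only [Finset.mem_powerset] at hL
    rw [← Finset.inter_union_distrib_left, Finset.inter_eq_left.2 hL]
  · intro P hP
    simp only [Finset.mem_product, Finset.mem_powerset] at hP
    have e1 : P.2 ∩ E1 = ∅ := Finset.disjoint_iff_inter_eq_empty.1 (h.symm.mono_left hP.2)
    have e2 : P.1 ∩ E2 = ∅ := Finset.disjoint_iff_inter_eq_empty.1 (h.mono_left hP.1)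
    have h1 : (P.1 ∪ P.2) ∩ E1 = P.1 := by
      rw [Finset.union_inter_distrib_right, Finset.inter_eq_left.2 hP.1, e1, Finset.union_empty]
    have h2 : (P.1 ∪ P.2) ∩ E2 = P.2 := by
      rw [Finset.union_inter_distrib_right, Finset.inter_eq_left.2 hP.2, e2, Finset.empty_union]
    simp [h1, h2]
  · intro L hL
    rw [← Finset.inter_union_distrib_left, Finset.inter_eq_left.2 (Finset.mem_powerset.1 hL)]

lemma edgeWeight_union [DecidableEq V] {E1 E2 L1 L2 : Finset (V × V)} (h : Disjoint E1 E2)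
    (p : V × V → ℝ) (hL1 : L1 ⊆ E1) (hL2 : L2 ⊆ E2) :
    edgeWeight (E1 ∪ E2) p (L1 ∪ L2) = edgeWeight E1 p L1 * edgeWeight E2 p L2 := by
  have hd : Disjoint L1 L2 := (h.mono_left hL1).mono_right hL2
  have hd' : Disjoint (E1 \ L1) (E2 \ L2) :=
    (h.mono_left (Finset.sdiff_subset)).mono_right (Finset.sdiff_subset)
  have hsd : (E1 ∪ E2) \ (L1 ∪ L2) = (E1 \ L1) ∪ (E2 \ L2) := by
    ext e
    simp only [Finset.mem_sdiff, Finset.mem_union]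
    constructor
    · rintro ⟨he, hne⟩
      push_neg at hne
      rcases he with he | he
      · exact Or.inl ⟨he, hne.1⟩
      · exact Or.inr ⟨he, hne.2⟩
    · rintro (⟨he, hne⟩ | ⟨he, hne⟩)
      · refine ⟨Or.inl he, ?_⟩
        push_neg
        exact ⟨hne, fun hc => Finset.disjoint_right.1 h (hL2 hc) he⟩
      · refine ⟨Or.inr he, ?_⟩
        push_neg
        exact ⟨fun hc => Finset.disjoint_left.1 h (hL1 hc) he, hne⟩
  unfold edgeWeight
  rw [hsd, Finset.prod_union hd, Finset.prod_union hd']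
  ring

lemma sum_factor [DecidableEq V] {E1 E2 : Finset (V × V)} (h : Disjoint E1 E2)
    (p : V × V → ℝ) (f g : Finset (V × V) → ℝ) :
    ∑ L ∈ (E1 ∪ E2).powerset, edgeWeight (E1 ∪ E2) p L * (f (L ∩ E1) * g (L ∩ E2))
      = (∑ L1 ∈ E1.powerset, edgeWeight E1 p L1 * f L1)
        * (∑ L2 ∈ E2.powerset, edgeWeight E2 p L2 * g L2) := by
  rw [sum_powerset_union h]
  rw [Finset.sum_mul_sum]
  apply Finset.sum_congr rfl
  intro L1 hL1
  apply Finset.sum_congr rfl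
  intro L2 hL2
  simp only [Finset.mem_powerset] at hL1 hL2
  have e1 : (L1 ∪ L2) ∩ E1 = L1 := by
    rw [Finset.union_inter_distrib_right, Finset.inter_eq_left.2 hL1,
      Finset.disjoint_iff_inter_eq_empty.1 (h.symm.mono_left hL2), Finset.union_empty]
  have e2 : (L1 ∪ L2) ∩ E2 = L2 := by
    rw [Finset.union_inter_distrib_right, Finset.inter_eq_left.2 hL2,
      Finset.disjoint_iff_inter_eq_empty.1 (h.mono_left hL1), Finset.empty_union]
  rw [e1, e2, edgeWeight_union h p hL1 hL2]
  ring

lemma sum_restrict [DecidableEq V] {E1 E2 : Finset (V × V)} (h : Disjoint E1 E2)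
    (p : V × V → ℝ) (g : Finset (V × V) → ℝ) :
    ∑ L ∈ (E1 ∪ E2).powerset, edgeWeight (E1 ∪ E2) p L * g (L ∩ E2)
      = ∑ L2 ∈ E2.powerset, edgeWeight E2 p L2 * g L2 := by
  have := sum_factor h p (fun _ => 1) g
  simpa [sum_edgeWeight] using this

lemma sum_marginal [DecidableEq V] {F : Finset (V × V)} {e : V × V} (he : e ∈ F)
    (p : V × V → ℝ) :
    ∑ L ∈ F.powerset, edgeWeight F p L * (if e ∈ L then 1 else 0) = p e := by
  have hF : F = {e} ∪ (F \ {e}) := by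
    rw [Finset.union_sdiff_self_eq_union]
    exact (Finset.union_eq_right.2 (by simpa using he)).symm
  have hd : Disjoint ({e} : Finset (V × V)) (F \ {e}) := Finset.disjoint_sdiff
  have key : ∀ L : Finset (V × V), (if e ∈ L then (1:ℝ) else 0) = (if e ∈ L ∩ {e} then 1 else 0) := by
    intro L; simp
  have hfac := sum_factor hd p (fun M => if e ∈ M then (1:ℝ) else 0) (fun _ => (1:ℝ))
  calc ∑ L ∈ F.powerset, edgeWeight F p L * (if e ∈ L then 1 else 0)
      = ∑ L ∈ (({e} : Finset (V × V)) ∪ (F \ {e})).powerset,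
          edgeWeight (({e} : Finset (V × V)) ∪ (F \ {e})) p L
            * ((fun M => if e ∈ M then (1:ℝ) else 0) (L ∩ {e}) * (fun _ => (1:ℝ)) (L ∩ (F \ {e}))) := by
        rw [← hF]
        apply Finset.sum_congr rfl
        intro L _
        show edgeWeight F p L * _ = edgeWeight F p L * ((if e ∈ L ∩ {e} then (1:ℝ) else 0) * 1)
        rw [← key L]; ring
    _ = (∑ L1 ∈ ({e} : Finset (V × V)).powerset, edgeWeight {e} p L1 * (if e ∈ L1 then 1 else 0)) * 1 := by
        rw [hfac]
        simp only [mul_one, sum_edgeWeight]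
    _ = p e := by
        have hps : ({e} : Finset (V × V)).powerset = {∅, {e}} := by
          rw [show ({e} : Finset (V × V)) = insert e ∅ from rfl, Finset.powerset_insert]
          ext x; simp
        rw [hps]
        simp [edgeWeight]

lemma edgeWeight_congr [DecidableEq V] {E L : Finset (V × V)} {p q : V × V → ℝ}
    (hpq : ∀ e ∈ E, p e = q e) (hL : L ⊆ E) :
    edgeWeight E p L = edgeWeight E q L := by
  unfold edgeWeight
  have h1 : ∀ x ∈ L, p x = q x := fun x hx => hpq x (hL hx)
  have h2 : ∀ x ∈ E \ L, 1 - p x = 1 - q x := fun x hx => by rw [hpq x (Finset.sdiff_subset hx)]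
  rw [Finset.prod_congr rfl h1, Finset.prod_congr rfl h2]

lemma rt_congr {r s : V → V → Prop} (h : ∀ a b, r a b ↔ s a b) {a b : V} :
    Relation.ReflTransGen r a b ↔ Relation.ReflTransGen s a b :=
  ⟨Relation.ReflTransGen.mono (fun x y hxy => (h x y).1 hxy) a b,
   Relation.ReflTransGen.mono (fun x y hxy => (h x y).2 hxy) a b⟩

lemma sep [DecidableEq V] {L : Finset (V × V)} {W : Finset V} {u w : V}
    (hu : u ∉ W) (hw : w ∈ W)
    (hcross : ∀ a b : V, (a, b) ∈ L →
      (a ∈ W → b ∉ W → a = w ∧ b = u) ∧ (a ∉ W → b ∈ W → a = u ∧ b = w))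
    {a b : V} (h : Relation.ReflTransGen (fun x y => (x, y) ∈ L) a b) :
    (a ∈ W → b ∈ W → Relation.ReflTransGen (fun x y => (x, y) ∈ L ∧ x ∈ W ∧ y ∈ W) a b) ∧
    (a ∈ W → b ∉ W → (w, u) ∈ L ∧
        Relation.ReflTransGen (fun x y => (x, y) ∈ L ∧ x ∈ W ∧ y ∈ W) a w ∧
        Relation.ReflTransGen (fun x y => (x, y) ∈ L ∧ x ∉ W ∧ y ∉ W) u b) ∧
    (a ∉ W → b ∉ W → Relation.ReflTransGen (fun x y => (x, y) ∈ L ∧ x ∉ W ∧ y ∉ W) a b) ∧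
    (a ∉ W → b ∈ W → (u, w) ∈ L ∧
        Relation.ReflTransGen (fun x y => (x, y) ∈ L ∧ x ∉ W ∧ y ∉ W) a u ∧
        Relation.ReflTransGen (fun x y => (x, y) ∈ L ∧ x ∈ W ∧ y ∈ W) w b) := by
  induction h with
  | refl =>
      exact ⟨fun _ _ => .refl, fun ha hb => absurd ha hb, fun _ _ => .refl,
        fun ha hb => absurd hb ha⟩
  | @tail c d h1 h2 IH =>
      obtain ⟨IH1, IH2, IH3, IH4⟩ := IH
      by_cases hcW : c ∈ W <;> by_cases hdW : d ∈ W
      · refine ⟨fun ha _ => (IH1 ha hcW).tail ⟨h2, hcW, hdW⟩,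
                fun _ hd => absurd hdW hd,
                fun _ hd => absurd hdW hd,
                fun ha _ => ?_⟩
        obtain ⟨hL, h3, h4⟩ := IH4 ha hcW
        exact ⟨hL, h3, h4.tail ⟨h2, hcW, hdW⟩⟩
      · obtain ⟨hcw, hdu⟩ := (hcross c d h2).1 hcW hdW
        subst hcw; subst hdu
        exact ⟨fun _ hd => absurd hd hu,
               fun ha _ => ⟨h2, IH1 ha hcW, .refl⟩,
               fun ha _ => (IH4 ha hcW).2.1,
               fun _ hd => absurd hd hu⟩
      · obtain ⟨hcu, hdw⟩ := (hcross c d h2).2 hcW hdW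
        subst hcu; subst hdw
        exact ⟨fun ha _ => (IH2 ha hcW).2.1,
               fun _ hd => absurd hw hd,
               fun _ hd => absurd hw hd,
               fun ha _ => ⟨h2, IH3 ha hcW, .refl⟩⟩
      · refine ⟨fun _ hd => absurd hd hdW,
                fun ha _ => ?_,
                fun ha _ => (IH3 ha hcW).tail ⟨h2, hcW, hdW⟩,
                fun _ hd => absurd hd hdW⟩
        obtain ⟨hL, h3, h4⟩ := IH2 ha hcW
        exact ⟨hL, h3, h4.tail ⟨h2, hcW, hdW⟩⟩

def WW [Fintype V] [DecidableEq V] (T : SimpleGraph V) [DecidableRel T.Adj] (u w : V) :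
    Finset V := comp (treeEdges T \ {(u, w), (w, u)}) w

def EWs [Fintype V] [DecidableEq V] (T : SimpleGraph V) [DecidableRel T.Adj] (u w : V) :
    Finset (V × V) :=
  (treeEdges T).filter (fun e => e.1 ∈ WW T u w ∧ e.2 ∈ WW T u w)

def EUs [Fintype V] [DecidableEq V] (T : SimpleGraph V) [DecidableRel T.Adj] (u w : V) :
    Finset (V × V) :=
  (treeEdges T).filter (fun e => e.1 ∉ WW T u w ∧ e.2 ∉ WW T u w)

section TreeLemmas
variable [Fintype V] [DecidableEq V] (T : SimpleGraph V) [DecidableRel T.Adj]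

lemma mem_treeEdges {a b : V} : (a, b) ∈ treeEdges T ↔ T.Adj a b := by
  simp [treeEdges]

lemma mem_subE {u w a b : V} :
    (a, b) ∈ treeEdges T \ {(u, w), (w, u)} ↔
      T.Adj a b ∧ ¬(a = u ∧ b = w) ∧ ¬(a = w ∧ b = u) := by
  simp only [Finset.mem_sdiff, mem_treeEdges, Finset.mem_insert, Finset.mem_singleton,
    Prod.mk.injEq]
  tauto

lemma mem_WW {u w x : V} :
    x ∈ WW T u w ↔
      Relation.ReflTransGen (fun a b => (a, b) ∈ treeEdges T \ {(u, w), (w, u)}) w x := by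
  simp [WW, comp]

lemma w_mem_WW (u w : V) : w ∈ WW T u w := (mem_WW T).2 .refl

lemma WW_closed {u w a b : V} (ha : a ∈ WW T u w)
    (hab : (a, b) ∈ treeEdges T \ {(u, w), (w, u)}) : b ∈ WW T u w :=
  (mem_WW T).2 (((mem_WW T).1 ha).tail hab)

lemma subE_symm {u w a b : V} (h : (a, b) ∈ treeEdges T \ {(u, w), (w, u)}) :
    (b, a) ∈ treeEdges T \ {(u, w), (w, u)} := by
  rw [mem_subE] at h ⊢
  exact ⟨h.1.symm, fun hc => h.2.2 ⟨hc.2, hc.1⟩, fun hc => h.2.1 ⟨hc.2, hc.1⟩⟩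

lemma WW_nocross {u w a b : V} (hab : (a, b) ∈ treeEdges T \ {(u, w), (w, u)}) :
    a ∈ WW T u w ↔ b ∈ WW T u w :=
  ⟨fun ha => WW_closed T ha hab, fun hb => WW_closed T hb (subE_symm T hab)⟩

lemma walk_rt {a b : V} (q : T.Walk a b) :
    Relation.ReflTransGen (fun x y => (x, y) ∈ treeEdges T) a b := by
  induction q with
  | nil => exact .refl
  | cons h q ih => exact Relation.ReflTransGen.head ((mem_treeEdges T).2 h) ih

lemma rt_to_walk_avoid {u w a b : V}
    (h : Relation.ReflTransGen (fun x y => (x, y) ∈ treeEdges T \ {(u, w), (w, u)}) a b) :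
    ∃ q : T.Walk a b, s(u, w) ∉ q.edges := by
  induction h with
  | refl => exact ⟨.nil, by simp⟩
  | @tail c d h1 h2 ih =>
      obtain ⟨q, hq⟩ := ih
      rw [mem_subE] at h2
      refine ⟨q.concat h2.1, ?_⟩
      rw [SimpleGraph.Walk.edges_concat, List.concat_eq_append, List.mem_append]
      rintro (hc | hc)
      · exact hq hc
      · simp only [List.mem_singleton, Sym2.eq, Sym2.rel_iff', Prod.mk.injEq, Prod.swap_prod_mk]
        at hc
        rcases hc with ⟨h3, h4⟩ | ⟨h3, h4⟩
        · exact h2.2.1 ⟨h3.symm, h4.symm⟩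
        · exact h2.2.2 ⟨h4.symm, h3.symm⟩

lemma u_not_mem_WW (hT : T.IsTree) {u w : V} (hadj : T.Adj u w) : u ∉ WW T u w := by
  intro hu
  obtain ⟨q, hq⟩ := rt_to_walk_avoid T ((mem_WW T).1 hu)
  have hpq : q.toPath = SimpleGraph.Path.singleton hadj.symm :=
    SimpleGraph.isAcyclic_iff_path_unique.1 hT.IsAcyclic _ _
  have hmem : s(w, u) ∈ (q.toPath : T.Walk w u).edges := by
    rw [hpq]
    simp [SimpleGraph.Path.singleton]
  have hsub : (q.toPath : T.Walk w u).edges ⊆ q.edges :=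
    SimpleGraph.Walk.edges_bypass_subset _
  have : s(u, w) ∈ q.edges := by
    have := hsub hmem
    rwa [Sym2.eq_swap] at this
  exact hq this

lemma cross_class (hT : T.IsTree) {u w : V} (hadj : T.Adj u w) {a b : V}
    (hab : (a, b) ∈ treeEdges T) :
    (a ∈ WW T u w → b ∉ WW T u w → a = w ∧ b = u) ∧
    (a ∉ WW T u w → b ∈ WW T u w → a = u ∧ b = w) := by
  by_cases hsub : (a, b) ∈ treeEdges T \ {(u, w), (w, u)}
  · have := WW_nocross T hsub
    exact ⟨fun ha hb => absurd (this.1 ha) hb, fun ha hb => absurd (this.2 hb) ha⟩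
  · have : (a, b) ∈ ({(u, w), (w, u)} : Finset (V × V)) := by
      by_contra hc
      exact hsub (Finset.mem_sdiff.2 ⟨hab, hc⟩)
    simp only [Finset.mem_insert, Finset.mem_singleton, Prod.mk.injEq] at this
    rcases this with ⟨ha', hb'⟩ | ⟨ha', hb'⟩
    · exact ⟨fun ha _ => absurd (ha' ▸ ha) (u_not_mem_WW T hT hadj),
             fun _ _ => ⟨ha', hb'⟩⟩
    · exact ⟨fun _ _ => ⟨ha', hb'⟩,
             fun _ hb => absurd (hb' ▸ hb) (u_not_mem_WW T hT hadj)⟩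

end TreeLemmas

section TreeLemmas2
variable [Fintype V] [DecidableEq V] (T : SimpleGraph V) [DecidableRel T.Adj]

lemma cover (hT : T.IsTree) {u v : V} (hv : v ≠ u) :
    ∃ w ∈ T.neighborFinset u, v ∈ WW T u w := by
  have hrt : Relation.ReflTransGen (fun x y => (x, y) ∈ treeEdges T) u v :=
    (hT.isConnected.preconnected u v).elim (fun q => walk_rt T q)
  have key : ∀ x, Relation.ReflTransGen (fun a b => (a, b) ∈ treeEdges T) u x →
      x = u ∨ ∃ w ∈ T.neighborFinset u, x ∈ WW T u w := by
    intro x hx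
    induction hx with
    | refl => exact Or.inl rfl
    | @tail c d h1 h2 ih =>
        by_cases hdu : d = u
        · exact Or.inl hdu
        · right
          rcases ih with rfl | ⟨w, hwN, hcW⟩
          · refine ⟨d, ?_, w_mem_WW T c d⟩
            rw [SimpleGraph.mem_neighborFinset]
            exact (mem_treeEdges T).1 h2
          · refine ⟨w, hwN, WW_closed T hcW ?_⟩
            have hcu : c ≠ u := fun hc => u_not_mem_WW T hT
              (by rwa [SimpleGraph.mem_neighborFinset] at hwN) (hc ▸ hcW)
            rw [mem_subE]
            exact ⟨(mem_treeEdges T).1 h2, fun hc => hcu hc.1, fun hc => hdu hc.2⟩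
  rcases key v hrt with rfl | h
  · exact absurd rfl hv
  · exact h

lemma keyA [Fintype V] [DecidableEq V] (T : SimpleGraph V) [DecidableRel T.Adj]
    {u w₀ : V} (hu0 : u ∉ WW T u w₀) {x : V} (hx : x ∈ WW T u w₀) :
    Relation.ReflTransGen (fun a b => (a, b) ∈ treeEdges T ∧ a ≠ u ∧ b ≠ u) w₀ x := by
  rw [mem_WW] at hx
  induction hx with
  | refl => exact .refl
  | @tail c d h1 h2 ih =>
      have hc : c ∈ WW T u w₀ := (mem_WW T).2 h1
      have hd : d ∈ WW T u w₀ := WW_closed T hc h2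
      exact ih.tail ⟨Finset.sdiff_subset h2,
        fun hcu => hu0 (hcu ▸ hc), fun hdu => hu0 (hdu ▸ hd)⟩

lemma WW_disjoint [Fintype V] [DecidableEq V] (T : SimpleGraph V) [DecidableRel T.Adj]
    (hT : T.IsTree) {u w w' : V} (hadj : T.Adj u w) (hadj' : T.Adj u w')
    (hne : w ≠ w') : Disjoint (WW T u w) (WW T u w') := by
  rw [Finset.disjoint_left]
  intro v hvw hvw'
  have h1 := keyA T (u_not_mem_WW T hT hadj) hvw
  have h2 := keyA T (u_not_mem_WW T hT hadj') hvw'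
  have hsymm : Symmetric (fun a b : V => (a, b) ∈ treeEdges T ∧ a ≠ u ∧ b ≠ u) :=
    fun x y ⟨he, hxu, hyu⟩ => ⟨(mem_treeEdges T).2 ((mem_treeEdges T).1 he).symm, hyu, hxu⟩
  haveI : Std.Symm (fun a b : V => (a, b) ∈ treeEdges T ∧ a ≠ u ∧ b ≠ u) :=
    ⟨fun a b h => hsymm h⟩
  have h2' := (Relation.ReflTransGen.symmetric
    (r := fun a b : V => (a, b) ∈ treeEdges T ∧ a ≠ u ∧ b ≠ u)).symm _ _ h2
  have hrt := h1.trans h2'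
  have hww' : w' ∈ WW T u w := by
    rw [mem_WW]
    refine Relation.ReflTransGen.mono (fun a b hab => ?_) _ _ hrt
    rw [mem_subE]
    exact ⟨(mem_treeEdges T).1 hab.1, fun hc => hab.2.1 hc.1, fun hc => hab.2.2 hc.2⟩
  have hu : u ∈ WW T u w := by
    refine WW_closed T hww' ?_
    rw [mem_subE]
    exact ⟨hadj'.symm, fun hc => hadj'.ne' hc.1, fun hc => hne (hc.1.symm ▸ rfl)⟩
  exact u_not_mem_WW T hT hadj hu

end TreeLemmas2

section Events
variable [Fintype V] [DecidableEq V] (T : SimpleGraph V) [DecidableRel T.Adj]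

lemma rel_inter_EW {u w : V} {L : Finset (V × V)} (hL : L ⊆ treeEdges T) :
    ∀ x y : V, ((x, y) ∈ L ∧ x ∈ WW T u w ∧ y ∈ WW T u w) ↔ (x, y) ∈ L ∩ EWs T u w := by
  intro x y
  simp only [Finset.mem_inter, EWs, Finset.mem_filter]
  exact ⟨fun ⟨h1, h2, h3⟩ => ⟨h1, hL h1, h2, h3⟩, fun ⟨h1, _, h2, h3⟩ => ⟨h1, h2, h3⟩⟩

lemma rel_inter_EU {u w : V} {L : Finset (V × V)} (hL : L ⊆ treeEdges T) :
    ∀ x y : V, ((x, y) ∈ L ∧ x ∉ WW T u w ∧ y ∉ WW T u w) ↔ (x, y) ∈ L ∩ EUs T u w := by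
  intro x y
  simp only [Finset.mem_inter, EUs, Finset.mem_filter]
  exact ⟨fun ⟨h1, h2, h3⟩ => ⟨h1, hL h1, h2, h3⟩, fun ⟨h1, _, h2, h3⟩ => ⟨h1, h2, h3⟩⟩

lemma reaches_decomp (hT : T.IsTree) {u w : V} (hadj : T.Adj u w)
    {L : Finset (V × V)} (hL : L ⊆ treeEdges T) {v : V} (hv : v ∈ WW T u w) (S : Finset V) :
    Reaches L S v ↔
      (Reaches (L ∩ EWs T u w) (S ∩ WW T u w) v ∨
        ((u, w) ∈ L ∧ Reaches (L ∩ EUs T u w) S u ∧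
          Relation.ReflTransGen (fun x y => (x, y) ∈ L ∩ EWs T u w) w v)) := by
  constructor
  · rintro ⟨s, hs, hrt⟩
    have hsep := sep (u_not_mem_WW T hT hadj) (w_mem_WW T u w)
      (fun a b hab => cross_class T hT hadj (hL hab)) hrt
    by_cases hsW : s ∈ WW T u w
    · exact Or.inl ⟨s, Finset.mem_inter.2 ⟨hs, hsW⟩,
        (rt_congr (rel_inter_EW T hL)).1 (hsep.1 hsW hv)⟩
    · obtain ⟨hX, hC, hD⟩ := hsep.2.2.2 hsW hv
      exact Or.inr ⟨hX, ⟨s, hs, (rt_congr (rel_inter_EU T hL)).1 hC⟩,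
        (rt_congr (rel_inter_EW T hL)).1 hD⟩
  · rintro (⟨s, hs, hrt⟩ | ⟨hX, ⟨s, hs, hC⟩, hD⟩)
    · exact ⟨s, (Finset.mem_inter.1 hs).1,
        Relation.ReflTransGen.mono (fun a b hab => (Finset.mem_inter.1 hab).1) _ _ hrt⟩
    · refine ⟨s, hs, ?_⟩
      exact ((Relation.ReflTransGen.mono (fun a b hab => (Finset.mem_inter.1 hab).1) _ _ hC).tail hX).trans
        (Relation.ReflTransGen.mono (fun a b hab => (Finset.mem_inter.1 hab).1) _ _ hD)

lemma reaches_subE (hT : T.IsTree) {u w : V} (hadj : T.Adj u w)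
    {L : Finset (V × V)} (hL : L ⊆ treeEdges T \ {(u, w), (w, u)}) (S : Finset V) :
    Reaches L S u ↔ Reaches (L ∩ EUs T u w) S u := by
  constructor
  · rintro ⟨s, hs, hrt⟩
    have hLE : L ⊆ treeEdges T := hL.trans Finset.sdiff_subset
    have hsep := sep (u_not_mem_WW T hT hadj) (w_mem_WW T u w)
      (fun a b hab => cross_class T hT hadj (hLE hab)) hrt
    by_cases hsW : s ∈ WW T u w
    · obtain ⟨hwu, -, -⟩ := hsep.2.1 hsW (u_not_mem_WW T hT hadj)
      have := (mem_subE T).1 (hL hwu)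
      exact absurd ⟨rfl, rfl⟩ this.2.2
    · exact ⟨s, hs, (rt_congr (rel_inter_EU T hLE)).1
        (hsep.2.2.1 hsW (u_not_mem_WW T hT hadj))⟩
  · rintro ⟨s, hs, hrt⟩
    exact ⟨s, hs, Relation.ReflTransGen.mono (fun a b hab => (Finset.mem_inter.1 hab).1) _ _ hrt⟩

lemma reaches_inW (hT : T.IsTree) {u w : V} (hadj : T.Adj u w)
    {L : Finset (V × V)} (hL : L ⊆ treeEdges T \ {(u, w), (w, u)})
    {S₀ : Finset V} (hS₀ : S₀ ⊆ WW T u w) {v : V} (hv : v ∈ WW T u w) :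
    Reaches L S₀ v ↔ Reaches (L ∩ EWs T u w) S₀ v := by
  constructor
  · rintro ⟨s, hs, hrt⟩
    have hLE : L ⊆ treeEdges T := hL.trans Finset.sdiff_subset
    have hsep := sep (u_not_mem_WW T hT hadj) (w_mem_WW T u w)
      (fun a b hab => cross_class T hT hadj (hLE hab)) hrt
    exact ⟨s, hs, (rt_congr (rel_inter_EW T hLE)).1 (hsep.1 (hS₀ hs) hv)⟩
  · rintro ⟨s, hs, hrt⟩
    exact ⟨s, hs, Relation.ReflTransGen.mono (fun a b hab => (Finset.mem_inter.1 hab).1) _ _ hrt⟩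

lemma subE_eq (hT : T.IsTree) {u w : V} (hadj : T.Adj u w) :
    treeEdges T \ {(u, w), (w, u)} = EUs T u w ∪ EWs T u w := by
  ext ⟨a, b⟩
  constructor
  · intro h
    have hE : (a, b) ∈ treeEdges T := Finset.sdiff_subset h
    have hcross := WW_nocross T h
    by_cases haW : a ∈ WW T u w
    · exact Finset.mem_union_right _ (Finset.mem_filter.2 ⟨hE, haW, hcross.1 haW⟩)
    · exact Finset.mem_union_left _ (Finset.mem_filter.2 ⟨hE, haW,
        fun hb => haW (hcross.2 hb)⟩)
  · intro h
    rcases Finset.mem_union.1 h with h | h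
    · obtain ⟨hE, h1, h2⟩ := Finset.mem_filter.1 h
      rw [mem_subE]
      exact ⟨(mem_treeEdges T).1 hE,
        fun hc => h2 (hc.2 ▸ w_mem_WW T u w),
        fun hc => h1 (hc.1 ▸ w_mem_WW T u w)⟩
    · obtain ⟨hE, h1, h2⟩ := Finset.mem_filter.1 h
      rw [mem_subE]
      exact ⟨(mem_treeEdges T).1 hE,
        fun hc => u_not_mem_WW T hT hadj (hc.1 ▸ h1),
        fun hc => u_not_mem_WW T hT hadj (hc.2 ▸ h2)⟩

lemma edge_partition (hT : T.IsTree) {u w : V} (hadj : T.Adj u w) :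
    treeEdges T = (EUs T u w ∪ {(u, w), (w, u)}) ∪ EWs T u w := by
  ext ⟨a, b⟩
  constructor
  · intro h
    by_cases hsub : (a, b) ∈ treeEdges T \ {(u, w), (w, u)}
    · rw [subE_eq T hT hadj] at hsub
      rcases Finset.mem_union.1 hsub with h' | h'
      · exact Finset.mem_union_left _ (Finset.mem_union_left _ h')
      · exact Finset.mem_union_right _ h'
    · have : (a, b) ∈ ({(u, w), (w, u)} : Finset (V × V)) := by
        by_contra hc
        exact hsub (Finset.mem_sdiff.2 ⟨h, hc⟩)
      exact Finset.mem_union_left _ (Finset.mem_union_right _ this)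
  · intro h
    rcases Finset.mem_union.1 h with h | h
    · rcases Finset.mem_union.1 h with h | h
      · exact Finset.filter_subset _ _ h
      · simp only [Finset.mem_insert, Finset.mem_singleton] at h
        rcases h with h | h <;> rw [h, mem_treeEdges]
        · exact hadj
        · exact hadj.symm
    · exact Finset.filter_subset _ _ h

lemma disjoint_EW_EU (u w : V) : Disjoint (EWs T u w) (EUs T u w) := by
  rw [Finset.disjoint_left]
  intro e he he'
  exact (Finset.mem_filter.1 he').2.1 (Finset.mem_filter.1 he).2.1

lemma disjoint_EW_pair (hT : T.IsTree) {u w : V} (hadj : T.Adj u w) :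
    Disjoint (EWs T u w) ({(u, w), (w, u)} : Finset (V × V)) := by
  rw [Finset.disjoint_right]
  intro e he
  simp only [Finset.mem_insert, Finset.mem_singleton] at he
  rcases he with rfl | rfl <;> intro hc
  · exact u_not_mem_WW T hT hadj (Finset.mem_filter.1 hc).2.1
  · exact u_not_mem_WW T hT hadj (Finset.mem_filter.1 hc).2.2

lemma disjoint_EU_pair (u w : V) :
    Disjoint (EUs T u w) ({(u, w), (w, u)} : Finset (V × V)) := by
  rw [Finset.disjoint_right]
  intro e he
  simp only [Finset.mem_insert, Finset.mem_singleton] at he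
  rcases he with rfl | rfl <;> intro hc
  · exact (Finset.mem_filter.1 hc).2.2 (w_mem_WW T u w)
  · exact (Finset.mem_filter.1 hc).2.1 (w_mem_WW T u w)

end Events

section Analytic
variable [Fintype V] [DecidableEq V]

lemma spreadOn_eq (E : Finset (V × V)) (r : V × V → ℝ) (S W : Finset V) :
    spreadOn E r S W = ∑ v ∈ W, ap E r S v := by
  unfold spreadOn ap
  rw [Finset.sum_comm]
  apply Finset.sum_congr rfl
  intro L _
  rw [Finset.card_filter, Nat.cast_sum, Finset.mul_sum]
  apply Finset.sum_congr rfl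
  intro v _
  split_ifs <;> simp

lemma ind_alg {A X C D P Q : Prop} [Decidable A] [Decidable X] [Decidable C]
    [Decidable D] [Decidable P] [Decidable Q]
    (hP : P ↔ A ∨ (X ∧ C ∧ D)) (hQ : Q ↔ A ∨ D) :
    (if P then (1 : ℝ) else 0) =
      (if A then (1 : ℝ) else 0) +
        ((if C then (1 : ℝ) else 0) * (if X then (1 : ℝ) else 0))
          * ((if Q then (1 : ℝ) else 0) - (if A then (1 : ℝ) else 0)) := by
  by_cases hA : A <;> by_cases hX : X <;> by_cases hC : C <;> by_cases hD : D <;>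
    simp [hP, hQ, hA, hX, hC, hD]

lemma ap_congr_prob {E : Finset (V × V)} {r r' : V × V → ℝ}
    (h : ∀ e ∈ E, r e = r' e) (S : Finset V) (v : V) :
    ap E r S v = ap E r' S v := by
  unfold ap
  apply Finset.sum_congr rfl
  intro L hL
  rw [edgeWeight_congr h (Finset.mem_powerset.1 hL)]

lemma ap_seed {E : Finset (V × V)} (r : V × V → ℝ) {S : Finset V} {v : V} (hv : v ∈ S) :
    ap E r S v = 1 := by
  unfold ap
  have : ∀ L : Finset (V × V), Reaches L S v := fun L => ⟨v, hv, .refl⟩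
  simp only [this, if_true, mul_one]
  exact sum_edgeWeight E r

end Analytic

section Core
variable [Fintype V] [DecidableEq V] (T : SimpleGraph V) [DecidableRel T.Adj]

lemma ap_decomp (hT : T.IsTree) {u w : V} (hadj : T.Adj u w) (r : V × V → ℝ)
    {v : V} (hv : v ∈ WW T u w) (S : Finset V) :
    ap (treeEdges T) r S v =
      ap (EWs T u w) r (S ∩ WW T u w) v
        + (ap (EUs T u w) r S u * r (u, w))
          * (ap (EWs T u w) r (insert w (S ∩ WW T u w)) v
              - ap (EWs T u w) r (S ∩ WW T u w) v) := by
  have hpair : ((u, w) : V × V) ∈ ({(u, w), (w, u)} : Finset (V × V)) := by simp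
  have hdisUP := disjoint_EU_pair T u w
  have hdis12 : Disjoint (EUs T u w ∪ {(u, w), (w, u)}) (EWs T u w) := by
    rw [Finset.disjoint_union_left]
    exact ⟨(disjoint_EW_EU T u w).symm, (disjoint_EW_pair T hT hadj).symm⟩
  have hE := edge_partition T hT hadj
  have step1 : ap (treeEdges T) r S v
      = (∑ L ∈ (treeEdges T).powerset, edgeWeight (treeEdges T) r L *
          (if Reaches (L ∩ EWs T u w) (S ∩ WW T u w) v then (1 : ℝ) else 0))
        + (∑ L ∈ (treeEdges T).powerset, edgeWeight (treeEdges T) r L *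
          (((if Reaches ((L ∩ (EUs T u w ∪ {(u, w), (w, u)})) ∩ EUs T u w) S u
                then (1 : ℝ) else 0)
              * (if (u, w) ∈ L ∩ (EUs T u w ∪ {(u, w), (w, u)}) then (1 : ℝ) else 0))
           * ((if Reaches (L ∩ EWs T u w) (insert w (S ∩ WW T u w)) v then (1 : ℝ) else 0)
              - (if Reaches (L ∩ EWs T u w) (S ∩ WW T u w) v then (1 : ℝ) else 0)))) := by
    rw [← Finset.sum_add_distrib]
    unfold ap
    apply Finset.sum_congr rfl
    intro L hL
    rw [Finset.mem_powerset] at hL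
    rw [← mul_add]
    congr 1
    have hEU : (L ∩ (EUs T u w ∪ {(u, w), (w, u)})) ∩ EUs T u w = L ∩ EUs T u w := by
      rw [Finset.inter_assoc, Finset.union_inter_distrib_right, Finset.inter_self,
        Finset.disjoint_iff_inter_eq_empty.1 hdisUP.symm, Finset.union_empty]
    have hX : ((u, w) ∈ L ∩ (EUs T u w ∪ {(u, w), (w, u)})) ↔ (u, w) ∈ L := by
      simp only [Finset.mem_inter, Finset.mem_union]
      tauto
    have hiff := reaches_decomp T hT hadj hL hv S
    have hAD : Reaches (L ∩ EWs T u w) (insert w (S ∩ WW T u w)) v ↔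
        (Reaches (L ∩ EWs T u w) (S ∩ WW T u w) v ∨
          Relation.ReflTransGen (fun x y => (x, y) ∈ L ∩ EWs T u w) w v) := by
      unfold Reaches
      constructor
      · rintro ⟨s, hs, hrt⟩
        rcases Finset.mem_insert.1 hs with rfl | hs'
        · exact Or.inr hrt
        · exact Or.inl ⟨s, hs', hrt⟩
      · rintro (⟨s, hs, hrt⟩ | hrt)
        · exact ⟨s, Finset.mem_insert_of_mem hs, hrt⟩
        · exact ⟨w, Finset.mem_insert_self _ _, hrt⟩
    refine ind_alg ?_ hAD
    rw [hEU, hiff, hX]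
  rw [step1]
  have h1 : (∑ L ∈ (treeEdges T).powerset, edgeWeight (treeEdges T) r L *
        (if Reaches (L ∩ EWs T u w) (S ∩ WW T u w) v then (1 : ℝ) else 0))
      = ap (EWs T u w) r (S ∩ WW T u w) v := by
    rw [hE]
    have h := sum_restrict hdis12 r
      (fun M => if Reaches M (S ∩ WW T u w) v then (1 : ℝ) else 0)
    rw [h]
    rfl
  have h2 : (∑ L ∈ (treeEdges T).powerset, edgeWeight (treeEdges T) r L *
        (((if Reaches ((L ∩ (EUs T u w ∪ {(u, w), (w, u)})) ∩ EUs T u w) S u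
              then (1 : ℝ) else 0)
            * (if (u, w) ∈ L ∩ (EUs T u w ∪ {(u, w), (w, u)}) then (1 : ℝ) else 0))
         * ((if Reaches (L ∩ EWs T u w) (insert w (S ∩ WW T u w)) v then (1 : ℝ) else 0)
            - (if Reaches (L ∩ EWs T u w) (S ∩ WW T u w) v then (1 : ℝ) else 0))))
      = (ap (EUs T u w) r S u * r (u, w))
          * (ap (EWs T u w) r (insert w (S ∩ WW T u w)) v
              - ap (EWs T u w) r (S ∩ WW T u w) v) := by
    rw [hE]
    have h := sum_factor hdis12 r
      (fun M => (if Reaches (M ∩ EUs T u w) S u then (1 : ℝ) else 0)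
          * (if (u, w) ∈ M then (1 : ℝ) else 0))
      (fun M => (if Reaches M (insert w (S ∩ WW T u w)) v then (1 : ℝ) else 0)
          - (if Reaches M (S ∩ WW T u w) v then (1 : ℝ) else 0))
    rw [h]
    congr 1
    · have hXX : ∀ M : Finset (V × V),
          ((u, w) ∈ M ∩ ({(u, w), (w, u)} : Finset (V × V))) ↔ (u, w) ∈ M := by
        intro M
        simp only [Finset.mem_inter]
        exact ⟨fun h => h.1, fun h => ⟨h, hpair⟩⟩
      have h21 := sum_factor hdisUP r
        (fun K => if Reaches K S u then (1 : ℝ) else 0)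
        (fun P => if (u, w) ∈ P then (1 : ℝ) else 0)
      simp only [hXX] at h21
      rw [h21, sum_marginal hpair r]
      rfl
    · have hsub : ∀ N ∈ (EWs T u w).powerset,
          edgeWeight (EWs T u w) r N *
            ((if Reaches N (insert w (S ∩ WW T u w)) v then (1 : ℝ) else 0)
              - (if Reaches N (S ∩ WW T u w) v then (1 : ℝ) else 0))
          = edgeWeight (EWs T u w) r N *
              (if Reaches N (insert w (S ∩ WW T u w)) v then (1 : ℝ) else 0)
            - edgeWeight (EWs T u w) r N *
              (if Reaches N (S ∩ WW T u w) v then (1 : ℝ) else 0) := by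
        intro N _; ring
      rw [Finset.sum_congr rfl hsub, Finset.sum_sub_distrib]
      rfl
  rw [h1, h2]

end Core

section Core2
variable [Fintype V] [DecidableEq V] (T : SimpleGraph V) [DecidableRel T.Adj]

lemma apSub_eq (hT : T.IsTree) {u w : V} (hadj : T.Adj u w) (r : V × V → ℝ) (S : Finset V) :
    apSub (treeEdges T) r S u w = ap (EUs T u w) r S u := by
  unfold apSub
  have hset : treeEdges T \ {(w, u), (u, w)} = treeEdges T \ {(u, w), (w, u)} := by
    rw [Finset.pair_comm]
  rw [hset]
  unfold ap
  have hcongr : ∀ L ∈ (treeEdges T \ {(u, w), (w, u)}).powerset,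
      edgeWeight (treeEdges T \ {(u, w), (w, u)}) r L * (if Reaches L S u then (1 : ℝ) else 0)
        = edgeWeight (treeEdges T \ {(u, w), (w, u)}) r L *
            (if Reaches (L ∩ EUs T u w) S u then (1 : ℝ) else 0) := by
    intro L hL
    rw [Finset.mem_powerset] at hL
    rw [if_congr (reaches_subE T hT hadj hL S) rfl rfl]
  rw [Finset.sum_congr rfl hcongr]
  have hE2 : treeEdges T \ {(u, w), (w, u)} = EWs T u w ∪ EUs T u w := by
    rw [subE_eq T hT hadj, Finset.union_comm]
  rw [hE2]
  have h := sum_restrict (disjoint_EW_EU T u w) r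
    (fun M => if Reaches M S u then (1 : ℝ) else 0)
  rw [h]

lemma gain_eq (hT : T.IsTree) {u w : V} (hadj : T.Adj u w) (r : V × V → ℝ) (S : Finset V) :
    gain (treeEdges T) r S w u
      = ∑ v ∈ WW T u w, (ap (EWs T u w) r (insert w (S ∩ WW T u w)) v
          - ap (EWs T u w) r (S ∩ WW T u w) v) := by
  have key : ∀ S₀ : Finset V, S₀ ⊆ WW T u w → ∀ v ∈ WW T u w,
      ap (treeEdges T \ {(u, w), (w, u)}) r S₀ v = ap (EWs T u w) r S₀ v := by
    intro S₀ hS₀ v hv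
    unfold ap
    have hcongr : ∀ L ∈ (treeEdges T \ {(u, w), (w, u)}).powerset,
        edgeWeight (treeEdges T \ {(u, w), (w, u)}) r L *
            (if Reaches L S₀ v then (1 : ℝ) else 0)
          = edgeWeight (treeEdges T \ {(u, w), (w, u)}) r L *
              (if Reaches (L ∩ EWs T u w) S₀ v then (1 : ℝ) else 0) := by
      intro L hL
      rw [Finset.mem_powerset] at hL
      rw [if_congr (reaches_inW T hT hadj hL hS₀ hv) rfl rfl]
    rw [Finset.sum_congr rfl hcongr, subE_eq T hT hadj]
    have h := sum_restrict ((disjoint_EW_EU T u w).symm) r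
      (fun M => if Reaches M S₀ v then (1 : ℝ) else 0)
    rw [h]
  have hWW : comp (treeEdges T \ {(u, w), (w, u)}) w = WW T u w := rfl
  unfold gain
  rw [hWW, spreadOn_eq, spreadOn_eq, ← Finset.sum_sub_distrib]
  apply Finset.sum_congr rfl
  intro v hv
  rw [key (insert w (S ∩ WW T u w))
      (Finset.insert_subset (w_mem_WW T u w) Finset.inter_subset_right) v hv,
    key (S ∩ WW T u w) Finset.inter_subset_right v hv]

end Core2

theorem master [Fintype V] [DecidableEq V] (T : SimpleGraph V) [DecidableRel T.Adj]
    (hT : T.IsTree) (p p' : V × V → ℝ) (S B : Finset V) (u : V) :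
    spread (treeEdges T) (pB p p' (insert u B)) S =
      spread (treeEdges T) (pB p p' B) S
        + (ap (treeEdges T) (pB p p' (insert u B)) S u
            - ap (treeEdges T) (pB p p' B) S u)
        + ∑ v ∈ T.neighborFinset u,
            pB p p' B (u, v)
              * (apSub (treeEdges T) (pB p p' (insert u B)) S u v
                  - apSub (treeEdges T) (pB p p' B) S u v)
              * gain (treeEdges T) (pB p p' B) S v u := by
  by_cases huB : u ∈ B
  · rw [Finset.insert_eq_self.2 huB]
    simp
  set q : V × V → ℝ := pB p p' B with hq
  set q' : V × V → ℝ := pB p p' (insert u B) with hq'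
  have hqq : ∀ e : V × V, e.2 ≠ u → q' e = q e := by
    intro e he
    simp [hq, hq', pB, Finset.mem_insert, he]
  have hsplit : ∀ r : V × V → ℝ, spread (treeEdges T) r S
      = ap (treeEdges T) r S u
        + ∑ w0 ∈ T.neighborFinset u, ∑ v ∈ WW T u w0, ap (treeEdges T) r S v := by
    intro r
    unfold spread
    rw [spreadOn_eq, ← Finset.add_sum_erase _ _ (Finset.mem_univ u)]
    congr 1
    have hbi : Finset.univ.erase u
        = (T.neighborFinset u).biUnion (fun w0 => WW T u w0) := by
      ext v
      simp only [Finset.mem_erase, Finset.mem_univ, and_true, Finset.mem_biUnion]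
      constructor
      · intro hv
        exact cover T hT hv
      · rintro ⟨w0, hw0, hv⟩
        intro hvu
        rw [SimpleGraph.mem_neighborFinset] at hw0
        exact u_not_mem_WW T hT hw0 (hvu ▸ hv)
    rw [hbi, Finset.sum_biUnion]
    intro w0 hw0 w1 hw1 hne
    rw [Finset.mem_coe, SimpleGraph.mem_neighborFinset] at hw0 hw1
    exact WW_disjoint T hT hw0 hw1 hne
  have hper : ∀ w0 ∈ T.neighborFinset u,
      ∑ v ∈ WW T u w0, ap (treeEdges T) q' S v
        = ∑ v ∈ WW T u w0, ap (treeEdges T) q S v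
          + q (u, w0) * (apSub (treeEdges T) q' S u w0 - apSub (treeEdges T) q S u w0)
            * gain (treeEdges T) q S w0 u := by
    intro w0 hw0
    rw [SimpleGraph.mem_neighborFinset] at hw0
    have hadj : T.Adj u w0 := hw0
    have hqEW : ∀ e ∈ EWs T u w0, q' e = q e := by
      intro e he
      apply hqq
      intro hc
      exact u_not_mem_WW T hT hadj (hc ▸ (Finset.mem_filter.1 he).2.2)
    have hq_uw : q' (u, w0) = q (u, w0) := hqq _ hadj.ne'
    have hpt : ∀ v ∈ WW T u w0,
        ap (treeEdges T) q' S v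
          = ap (treeEdges T) q S v
            + q (u, w0) * (ap (EUs T u w0) q' S u - ap (EUs T u w0) q S u)
              * (ap (EWs T u w0) q (insert w0 (S ∩ WW T u w0)) v
                  - ap (EWs T u w0) q (S ∩ WW T u w0) v) := by
      intro v hv
      rw [ap_decomp T hT hadj q' hv S, ap_decomp T hT hadj q hv S,
        ap_congr_prob hqEW (S ∩ WW T u w0) v,
        ap_congr_prob hqEW (insert w0 (S ∩ WW T u w0)) v, hq_uw]
      ring
    rw [Finset.sum_congr rfl hpt, Finset.sum_add_distrib]
    congr 1
    rw [apSub_eq T hT hadj q' S, apSub_eq T hT hadj q S, gain_eq T hT hadj q S,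
      Finset.mul_sum]
  rw [hsplit q', hsplit q, Finset.sum_congr rfl hper, Finset.sum_add_distrib]
  ring

/-- Marginal gain of boosting one more node on a bidirected tree.
If `u ∈ S ∪ B` then `σ_S(B ∪ {u}) = σ_S(B)`; if `u ∉ S ∪ B` then
`σ_S(B ∪ {u}) = σ_S(B) + Δap_B(u) + ∑_{v ∈ N(u)} p^B_{uv} · Δap_B(u\v) · g_B(v\u)`,
where `Δap_B(u) = ap_{B∪{u}}(u) − ap_B(u)` and
`Δap_B(u\v) = ap_{B∪{u}}(u\v) − ap_B(u\v)`. -/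
theorem spread_insert_boost [Fintype V] [DecidableEq V]
    (T : SimpleGraph V) [DecidableRel T.Adj] (hT : T.IsTree)
    (p p' : V × V → ℝ)
    (hp0 : ∀ e, 0 ≤ p e) (hpp' : ∀ e, p e ≤ p' e) (hp'1 : ∀ e, p' e ≤ 1)
    (S B : Finset V) (u : V) :
    (u ∈ S ∪ B →
      spread (treeEdges T) (pB p p' (insert u B)) S =
        spread (treeEdges T) (pB p p' B) S) ∧
    (u ∉ S ∪ B →
      spread (treeEdges T) (pB p p' (insert u B)) S =
        spread (treeEdges T) (pB p p' B) S
          + (ap (treeEdges T) (pB p p' (insert u B)) S u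
              - ap (treeEdges T) (pB p p' B) S u)
          + ∑ v ∈ T.neighborFinset u,
              pB p p' B (u, v)
                * (apSub (treeEdges T) (pB p p' (insert u B)) S u v
                    - apSub (treeEdges T) (pB p p' B) S u v)
                * gain (treeEdges T) (pB p p' B) S v u) := by
  constructor
  · intro hu
    rcases Finset.mem_union.1 hu with huS | huB
    · rw [master T hT p p' S B u]
      have h3 : ∀ (v : V) (r : V × V → ℝ), apSub (treeEdges T) r S u v = 1 := by
        intro v r
        unfold apSub
        exact ap_seed _ huS
      rw [ap_seed (pB p p' (insert u B)) huS, ap_seed (pB p p' B) huS]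
      simp [h3]
    · rw [Finset.insert_eq_self.2 huB]
  · intro _
    exact master T hT p p' S B u


end
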